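/- Let F(t) = t + β/(t − a) with |a| > 1 and β ≠ 0, and let F_*(t) = conj(F(1/conj(t))) = t^{-1} + conj(β) t /(1 − conj(a) t). Then the kernel of the Hankel operator Γ_{F_*} on the Hardy space H² equals {x ∈ H² : x(0) = 0 and x(1/conj(a)) = 0}; equivalently, Ker Γ_{F_*} = α H² where α(t) = t · (t − 1/conj(a))/(1 − (1/a) t) is a Blaschke product of degree 2. -/

import Mathlib

open MeasureTheory Complex AddCircle
open scoped ComplexInnerProductSpace Real

noncomputable section

local instance : Fact ((0:ℝ) < 2 * Real.pi) := ⟨by positivity⟩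

/-- The Hilbert space `L²(𝕋)`, realized over the circle of circumference `2π`. -/
abbrev L2S := Lp ℂ 2 (haarAddCircle : Measure (AddCircle (2 * Real.pi)))

/-- The scalar Hardy space `H²`. -/
def Hardy1 : Set L2S := {f | ∀ n : ℤ, n < 0 → fourierCoeff (⇑f) n = 0}

/-- The boundary symbol `F_*(t) = t⁻¹ + conj(β)·t/(1 − conj(a)·t)`, where the circle point
is `t = e^{iθ} = fourier 1 θ` so `t⁻¹ = fourier (−1) θ`. -/
def Fstar (a β : ℂ) (θ : AddCircle (2 * Real.pi)) : ℂ :=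
  fourier (-1) θ + starRingEnd ℂ β * fourier 1 θ / (1 - starRingEnd ℂ a * fourier 1 θ)

set_option linter.unusedSectionVars false

namespace HankelAux

variable {T : ℝ} [hT : Fact (0 < T)]

lemma norm_fourier_apply (k : ℤ) (θ : AddCircle T) : ‖fourier k θ‖ = 1 := Circle.norm_coe _

lemma fc_congr {f g : AddCircle T → ℂ} (h : f =ᵐ[haarAddCircle] g) (n : ℤ) :
    fourierCoeff f n = fourierCoeff g n := by
  unfold fourierCoeff
  exact integral_congr_ae (h.mono fun θ hθ => by simp only []; rw [hθ])

lemma int_mul (k : ℤ) {f : AddCircle T → ℂ} (hf : Integrable f haarAddCircle) :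
    Integrable (fun θ => fourier k θ * f θ) haarAddCircle :=
  hf.bdd_mul (map_continuous (fourier k)).aestronglyMeasurable
    (Filter.Eventually.of_forall fun θ => le_of_eq (norm_fourier_apply k θ))

lemma fc_shift (k : ℤ) (f : AddCircle T → ℂ) (n : ℤ) :
    fourierCoeff (fun θ => fourier k θ * f θ) n = fourierCoeff f (n - k) := by
  unfold fourierCoeff
  congr 1
  funext θ
  rw [smul_eq_mul, smul_eq_mul, ← mul_assoc, ← fourier_add]
  have : -n + k = -(n - k) := by ring
  rw [this]

lemma fc_add {f g : AddCircle T → ℂ} (hf : Integrable f haarAddCircle)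
    (hg : Integrable g haarAddCircle) (n : ℤ) :
    fourierCoeff (fun θ => f θ + g θ) n = fourierCoeff f n + fourierCoeff g n := by
  unfold fourierCoeff
  simp_rw [smul_eq_mul, mul_add]
  exact integral_add (int_mul (-n) hf) (int_mul (-n) hg)

lemma fc_sub {f g : AddCircle T → ℂ} (hf : Integrable f haarAddCircle)
    (hg : Integrable g haarAddCircle) (n : ℤ) :
    fourierCoeff (fun θ => f θ - g θ) n = fourierCoeff f n - fourierCoeff g n := by
  unfold fourierCoeff
  simp_rw [smul_eq_mul, mul_sub]
  exact integral_sub (int_mul (-n) hf) (int_mul (-n) hg)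

lemma fc_norm_le (f : AddCircle T → ℂ) (n : ℤ) :
    ‖fourierCoeff f n‖ ≤ ∫ θ, ‖f θ‖ ∂(haarAddCircle : Measure (AddCircle T)) := by
  refine (norm_integral_le_integral_norm _).trans_eq ?_
  congr 1
  funext θ
  rw [norm_smul, norm_fourier_apply, one_mul]

end HankelAux

open HankelAux Filter

/-- For `F(t) = t + β/(t−a)` with `|a| > 1`, `β ≠ 0`, the kernel of the
Hankel operator `Γ_{F_*}` on `H²` is `{x ∈ H² : x(0) = 0 and x(1/conj a) = 0}`, where the
values of the analytic extension are `x(0) = x̂(0)` and `x(1/conj a) = Σₙ x̂(n)(1/conj a)ⁿ`;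
equivalently `Ker Γ_{F_*} = α H²` with `α` the degree-2 Blaschke product vanishing at `0`
and `1/conj a`. -/
theorem kernel_of_hankel_rational_symbol (a β : ℂ) (ha : 1 < ‖a‖) (hβ : β ≠ 0)
    -- `P` is the orthogonal projection of `L²(𝕋)` onto `H²`:
    (P : L2S →L[ℂ] L2S)
    (hPmem : ∀ f : L2S, P f ∈ Hardy1)
    (hPorth : ∀ f : L2S, ∀ g ∈ Hardy1, ⟪f - P f, g⟫ = 0)
    -- multiplication operator by the symbol `F_*`:
    (MFs : L2S →L[ℂ] L2S)
    (hMFs : ∀ f : L2S, ⇑(MFs f) =ᵐ[haarAddCircle] fun θ => Fstar a β θ * (⇑f) θ)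
    (x : L2S) (hx : x ∈ Hardy1) :
    -- `Γ_{F_*} x = (1 − P)(F_* x) = 0` iff `x(0) = 0` and `x(1/conj a) = 0`:
    MFs x - P (MFs x) = 0 ↔
      (fourierCoeff (⇑x) 0 = 0 ∧
        ∑' n : ℕ, fourierCoeff (⇑x) (n : ℤ) * ((starRingEnd ℂ a)⁻¹) ^ n = 0) := by
  have hx' : ∀ n : ℤ, n < 0 → fourierCoeff (⇑x) n = 0 := hx
  set c : ℂ := starRingEnd ℂ a with hcdef
  set b : ℂ := starRingEnd ℂ β with hbdef
  have hc1 : 1 < ‖c‖ := by rwa [hcdef, RCLike.norm_conj]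
  have hc0 : c ≠ 0 := by
    intro h; rw [h, norm_zero] at hc1; linarith
  have hci : c⁻¹ ≠ 0 := inv_ne_zero hc0
  have hb0 : b ≠ 0 := by
    intro h; exact hβ (by simpa [hbdef, map_eq_zero] using h)
  have hcinv : ‖c⁻¹‖ < 1 := by
    rw [norm_inv, inv_lt_one_iff₀]
    right; exact hc1
  -- denominator never vanishes
  have hd : ∀ θ : AddCircle (2 * Real.pi), (1 : ℂ) - c * fourier 1 θ ≠ 0 := by
    intro θ h
    have h1 : c * fourier 1 θ = 1 := by linear_combination -h
    have h2 := congrArg norm h1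
    rw [norm_mul, norm_fourier_apply, mul_one, norm_one] at h2
    rw [h2] at hc1; linarith
  -- the rational part
  set h : AddCircle (2 * Real.pi) → ℂ :=
    fun θ => b * fourier 1 θ * x θ / (1 - c * fourier 1 θ) with hhdef
  have hkey : ∀ θ, h θ * (1 - c * fourier 1 θ) = b * fourier 1 θ * x θ := by
    intro θ
    rw [hhdef]
    simp only []
    rw [div_mul_cancel₀ _ (hd θ)]
  have hxint : Integrable (⇑x) (haarAddCircle : Measure (AddCircle (2 * Real.pi))) :=
    (Lp.memLp x).integrable (by norm_num)
  set φC : C(AddCircle (2 * Real.pi), ℂ) :=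
    ⟨fun θ => b * fourier 1 θ / (1 - c * fourier 1 θ), by
      apply Continuous.div
      · exact continuous_const.mul (map_continuous _)
      · exact continuous_const.sub (continuous_const.mul (map_continuous _))
      · exact hd⟩ with hφdef
  have hhint : Integrable h (haarAddCircle : Measure (AddCircle (2 * Real.pi))) := by
    have he : h = fun θ => φC θ * x θ := by
      funext θ; rw [hhdef, hφdef]; simp only [ContinuousMap.coe_mk]; ring
    rw [he]
    exact hxint.bdd_mul (map_continuous φC).aestronglyMeasurable
      (Filter.Eventually.of_forall fun θ => φC.norm_coe_le_norm θ)
  set u : ℤ → ℂ := fun n => fourierCoeff h n with hudef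
  -- the recursion
  have hrec : ∀ n : ℤ, u n = c * u (n - 1) + b * fourierCoeff (⇑x) (n - 1) := by
    intro n
    have hpt : h = fun θ => c * (fourier 1 θ * h θ) + b * (fourier 1 θ * x θ) := by
      funext θ
      have hk := hkey θ
      show h θ = c * (fourier 1 θ * h θ) + b * (fourier 1 θ * (⇑x) θ)
      clear_value h
      linear_combination hk
    calc u n = fourierCoeff (fun θ => c * (fourier 1 θ * h θ) + b * (fourier 1 θ * x θ)) n := by
          rw [← hpt]
      _ = fourierCoeff (fun θ => c * (fourier 1 θ * h θ)) n
            + fourierCoeff (fun θ => b * (fourier 1 θ * x θ)) n :=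
          fc_add ((int_mul 1 hhint).const_mul c) ((int_mul 1 hxint).const_mul b) n
      _ = c * fourierCoeff (fun θ => fourier 1 θ * h θ) n
            + b * fourierCoeff (fun θ => fourier 1 θ * x θ) n := by
          rw [fourierCoeff.const_mul, fourierCoeff.const_mul]
      _ = c * u (n - 1) + b * fourierCoeff (⇑x) (n - 1) := by
          rw [fc_shift, fc_shift, hudef]
  -- negative side
  have hneg : ∀ m : ℕ, u (-(m : ℤ)) = u 0 * c⁻¹ ^ m := by
    intro m
    induction m with
    | zero => simp
    | succ k ih =>
      have hr := hrec (-(k : ℤ))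
      rw [hx' (-(k : ℤ) - 1) (by omega), mul_zero, add_zero] at hr
      have e : (-(↑(k + 1) : ℤ)) = -(k : ℤ) - 1 := by push_cast; ring
      have h2 : u (-(k : ℤ) - 1) = u (-(k : ℤ)) * c⁻¹ := by
        rw [hr]; field_simp
      rw [e, h2, ih, pow_succ, mul_assoc]
  -- positive side partial sums
  have hpos : ∀ n : ℕ, u n * c⁻¹ ^ n
      = u 0 + b * ∑ j ∈ Finset.range n, fourierCoeff (⇑x) j * c⁻¹ ^ (j + 1) := by
    intro n
    induction n with
    | zero => simp
    | succ k ih =>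
      have hr := hrec ((k : ℤ) + 1)
      rw [add_sub_cancel_right] at hr
      have e : ((↑(k + 1) : ℤ)) = (k : ℤ) + 1 := by push_cast; ring
      rw [e, hr, Finset.sum_range_succ]
      have hcc : c * c⁻¹ = 1 := mul_inv_cancel₀ hc0
      have expand : (c * u k + b * fourierCoeff (⇑x) k) * c⁻¹ ^ (k + 1)
          = (c * c⁻¹) * (u k * c⁻¹ ^ k) + b * (fourierCoeff (⇑x) k * c⁻¹ ^ (k + 1)) := by
        rw [pow_succ]; ring
      rw [expand, hcc, one_mul, ih]; ring
  -- boundedness and limit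
  have hB : ∀ n : ℤ, ‖u n‖ ≤ ∫ θ, ‖h θ‖ ∂(haarAddCircle : Measure (AddCircle (2 * Real.pi))) :=
    fun n => fc_norm_le h n
  have hlim0 : Tendsto (fun n : ℕ => u n * c⁻¹ ^ n) atTop (nhds 0) := by
    apply squeeze_zero_norm
      (a := fun n => (∫ θ, ‖h θ‖ ∂(haarAddCircle : Measure (AddCircle (2 * Real.pi)))) * ‖c⁻¹‖ ^ n)
    · intro n
      rw [norm_mul, norm_pow]
      exact mul_le_mul_of_nonneg_right (hB n) (pow_nonneg (norm_nonneg _) n)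
    · have := (tendsto_pow_atTop_nhds_zero_of_lt_one (norm_nonneg _) hcinv).const_mul
        (∫ θ, ‖h θ‖ ∂(haarAddCircle : Measure (AddCircle (2 * Real.pi))))
      simpa using this
  -- summability of the series S
  have hsum : Summable (fun n : ℕ => fourierCoeff (⇑x) (n : ℤ) * c⁻¹ ^ n) := by
    apply Summable.of_norm_bounded
      (g := fun n => (∫ θ, ‖x θ‖ ∂(haarAddCircle : Measure (AddCircle (2 * Real.pi)))) * ‖c⁻¹‖ ^ n)
      ((summable_geometric_of_lt_one (norm_nonneg _) hcinv).mul_left _)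
    intro n
    rw [norm_mul, norm_pow]
    exact mul_le_mul_of_nonneg_right (fc_norm_le (⇑x) n) (pow_nonneg (norm_nonneg _) n)
  set S : ℂ := ∑' n : ℕ, fourierCoeff (⇑x) (n : ℤ) * c⁻¹ ^ n with hSdef
  have hsum' : HasSum (fun j : ℕ => fourierCoeff (⇑x) (j : ℤ) * c⁻¹ ^ (j + 1)) (S * c⁻¹) := by
    have h1 := hsum.hasSum.mul_right c⁻¹
    have he : (fun j : ℕ => fourierCoeff (⇑x) (j : ℤ) * c⁻¹ ^ (j + 1))
        = fun j : ℕ => fourierCoeff (⇑x) (j : ℤ) * c⁻¹ ^ j * c⁻¹ := by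
      funext j; rw [pow_succ]; ring
    rw [he, hSdef]
    exact h1
  have hlim1 : Tendsto (fun n : ℕ => u 0 + b * ∑ j ∈ Finset.range n,
      fourierCoeff (⇑x) (j : ℤ) * c⁻¹ ^ (j + 1)) atTop (nhds (u 0 + b * (S * c⁻¹))) :=
    ((hsum'.tendsto_sum_nat.const_mul b).const_add (u 0))
  have hu0 : u 0 = -(b * (S * c⁻¹)) := by
    have h1 : Tendsto (fun n : ℕ => u n * c⁻¹ ^ n) atTop (nhds (u 0 + b * (S * c⁻¹))) := by
      simp only [hpos]
      exact hlim1
    have h2 := tendsto_nhds_unique hlim0 h1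
    linear_combination -h2
  -- Fourier coefficients of MFs x
  have hMcoeff : ∀ n : ℤ, fourierCoeff (⇑(MFs x)) n = fourierCoeff (⇑x) (n + 1) + u n := by
    intro n
    have e1 : fourierCoeff (⇑(MFs x)) n = fourierCoeff (fun θ => Fstar a β θ * x θ) n :=
      fc_congr (hMFs x) n
    have e2 : (fun θ : AddCircle (2 * Real.pi) => Fstar a β θ * x θ)
        = fun θ => fourier (-1) θ * x θ + h θ := by
      funext θ
      have h2 : b * fourier 1 θ / (1 - c * fourier 1 θ) * x θ = h θ := by
        rw [hhdef]; simp only []; ring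
      simp only [Fstar, ← hcdef, ← hbdef]
      rw [← h2]; ring
    rw [e1, e2, fc_add (int_mul (-1) hxint) hhint, fc_shift, hudef]
    norm_num
  -- equivalence with Hardy membership
  have hmemiff : MFs x - P (MFs x) = 0 ↔ MFs x ∈ Hardy1 := by
    constructor
    · intro h0
      rw [sub_eq_zero] at h0
      rw [h0]
      exact hPmem _
    · intro hmem
      have hd1 : MFs x - P (MFs x) ∈ Hardy1 := by
        intro n hn
        have hae : ⇑(MFs x - P (MFs x)) =ᵐ[haarAddCircle]
            fun θ => (MFs x) θ - (P (MFs x)) θ := Lp.coeFn_sub _ _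
        rw [fc_congr hae n,
          fc_sub ((Lp.memLp (MFs x)).integrable (by norm_num))
            ((Lp.memLp (P (MFs x))).integrable (by norm_num)) n,
          hmem n hn, hPmem (MFs x) n hn, sub_zero]
      have := hPorth (MFs x) _ hd1
      exact inner_self_eq_zero.mp this
  rw [hmemiff]
  constructor
  · intro hmem
    have hS0 : S = 0 := by
      have h2 := hmem (-2) (by norm_num)
      rw [hMcoeff (-2), hx' (-2 + 1) (by norm_num), zero_add] at h2
      have h3 : u (-2 : ℤ) = u 0 * c⁻¹ ^ 2 := by exact_mod_cast hneg 2
      rw [h3, hu0] at h2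
      have h5 : b * (S * c⁻¹) * c⁻¹ ^ 2 = 0 := by linear_combination -h2
      rcases mul_eq_zero.mp h5 with h6 | h6
      · rcases mul_eq_zero.mp h6 with h7 | h7
        · exact absurd h7 hb0
        · rcases mul_eq_zero.mp h7 with h8 | h8
          · exact h8
          · exact absurd h8 hci
      · exact absurd h6 (pow_ne_zero 2 hci)
    refine ⟨?_, hS0⟩
    have h1 := hmem (-1) (by norm_num)
    rw [hMcoeff (-1)] at h1
    have h3 : u (-1 : ℤ) = u 0 * c⁻¹ ^ 1 := by exact_mod_cast hneg 1
    rw [h3, hu0, hS0] at h1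
    norm_num at h1
    exact h1
  · rintro ⟨h0, hS0⟩
    have hu00 : u 0 = 0 := by rw [hu0, hS0]; ring
    intro n hn
    rw [hMcoeff n]
    obtain ⟨m, rfl⟩ : ∃ m : ℕ, n = -((m : ℤ) + 1) := ⟨(-n - 1).toNat, by omega⟩
    have hum : u (-((m : ℤ) + 1)) = 0 := by
      have : u (-(↑(m + 1) : ℤ)) = u 0 * c⁻¹ ^ (m + 1) := hneg (m + 1)
      rw [hu00, zero_mul] at this
      convert this using 2
      omega
    rw [hum, add_zero]
    rcases Nat.eq_zero_or_pos m with hm | hm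
    · subst hm
      simpa using h0
    · exact hx' _ (by omega)
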